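/- Let G be a K_{2,3}-saturated graph on n vertices with minimum degree 3 such that for every vertex α of degree 3 the neighborhood N(α) induces a triangle. Then G has at least 2n − 2 edges. -/

import Mathlib

open SimpleGraph

/-- `G` contains a subgraph isomorphic to the complete bipartite graph `K_{2,3}`. -/
def HasK23 {V : Type*} (G : SimpleGraph V) : Prop :=
  ∃ f : (Fin 2 ⊕ Fin 3) ↪ V,
    ∀ a b, (completeBipartiteGraph (Fin 2) (Fin 3)).Adj a b → G.Adj (f a) (f b)

/-- `G` is `K_{2,3}`-saturated: `K_{2,3}`-free, but adding any edge between two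
non-adjacent vertices creates a `K_{2,3}`. -/
def K23Saturated {V : Type*} (G : SimpleGraph V) : Prop :=
  ¬ HasK23 G ∧ ∀ u v : V, u ≠ v → ¬ G.Adj u v →
    HasK23 (G ⊔ SimpleGraph.fromEdgeSet {s(u, v)})


open Finset
set_option maxHeartbeats 1600000
set_option linter.unusedVariables false in
lemma hasK23_of_config {V : Type*} (G : SimpleGraph V) (c d p q w : V)
    (hcd : c ≠ d) (hpq : p ≠ q) (hpw : p ≠ w) (hqw : q ≠ w)
    (hcp : c ≠ p) (hcq : c ≠ q) (hcw : c ≠ w)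
    (hdp : d ≠ p) (hdq : d ≠ q) (hdw : d ≠ w)
    (h1 : G.Adj c p) (h2 : G.Adj c q) (h3 : G.Adj c w)
    (h4 : G.Adj d p) (h5 : G.Adj d q) (h6 : G.Adj d w) : HasK23 G := by
  refine ⟨⟨fun a => Sum.elim (![c, d]) (![p, q, w]) a, ?_⟩, ?_⟩
  · rintro (a | a) (b | b) hab <;> fin_cases a <;> fin_cases b <;>
      simp_all [hcd.symm, hpq.symm, hpw.symm, hqw.symm, hcp.symm, hcq.symm, hcw.symm,
        hdp.symm, hdq.symm, hdw.symm] <;> tauto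
  · rintro (a | a) (b | b) hab <;> fin_cases a <;> fin_cases b <;> (try first | exact h1 | exact h2 | exact h3 | exact h4 | exact h5 | exact h6 | exact h1.symm | exact h2.symm | exact h3.symm | exact h4.symm | exact h5.symm | exact h6.symm) <;>
      simp_all [G.adj_symm, h1.symm, h2.symm, h3.symm, h4.symm, h5.symm, h6.symm]

set_option linter.unusedVariables false in
lemma extract_config {V : Type*} {G : SimpleGraph V} (hfree : ¬ HasK23 G)
    {u v : V} (hnadj : ¬ G.Adj u v)
    (h : HasK23 (G ⊔ SimpleGraph.fromEdgeSet {s(u, v)})) :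
    ∃ u' v' b y z : V, ((u' = u ∧ v' = v) ∨ (u' = v ∧ v' = u)) ∧
      b ≠ u' ∧ b ≠ v' ∧ y ≠ u' ∧ y ≠ v' ∧ z ≠ u' ∧ z ≠ v' ∧ b ≠ y ∧ b ≠ z ∧ y ≠ z ∧
      G.Adj v' b ∧ G.Adj b y ∧ G.Adj b z ∧ G.Adj u' y ∧ G.Adj u' z := by
  obtain ⟨f, hf⟩ := h
  set G' := G ⊔ SimpleGraph.fromEdgeSet {s(u, v)} with hG'
  have hadj : ∀ a b : V, G'.Adj a b → G.Adj a b ∨ (s(a, b) = s(u, v)) := by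
    intro a b hab
    rcases hab with hab | hab
    · exact Or.inl hab
    · exact Or.inr (by simpa using hab.1)
  -- the five vertices
  set c := f (Sum.inl 0) with hc
  set d := f (Sum.inl 1) with hd
  set p := f (Sum.inr 0) with hp
  set q := f (Sum.inr 1) with hq
  set r := f (Sum.inr 2) with hr
  have hinj := f.injective
  have hcd : c ≠ d := fun h => by simpa using hinj h
  have hpq : p ≠ q := fun h => by simpa using hinj h
  have hpr : p ≠ r := fun h => by simpa using hinj h
  have hqr : q ≠ r := fun h => by simpa using hinj h
  have hcp : c ≠ p := fun h => by simpa using hinj h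
  have hcq : c ≠ q := fun h => by simpa using hinj h
  have hcr : c ≠ r := fun h => by simpa using hinj h
  have hdp : d ≠ p := fun h => by simpa using hinj h
  have hdq : d ≠ q := fun h => by simpa using hinj h
  have hdr : d ≠ r := fun h => by simpa using hinj h
  have a1 : G'.Adj c p := hf _ _ (by simp)
  have a2 : G'.Adj c q := hf _ _ (by simp)
  have a3 : G'.Adj c r := hf _ _ (by simp)
  have a4 : G'.Adj d p := hf _ _ (by simp)
  have a5 : G'.Adj d q := hf _ _ (by simp)
  have a6 : G'.Adj d r := hf _ _ (by simp)
  -- helper: if the new edge is the pair (c0, p0)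
  have helper : ∀ c0 d0 p0 q0 r0 : V,
      c0 ≠ d0 → p0 ≠ q0 → p0 ≠ r0 → q0 ≠ r0 → c0 ≠ p0 → c0 ≠ q0 → c0 ≠ r0 →
      d0 ≠ p0 → d0 ≠ q0 → d0 ≠ r0 →
      s(c0, p0) = s(u, v) →
      G.Adj c0 q0 → G.Adj c0 r0 → G.Adj d0 p0 → G.Adj d0 q0 → G.Adj d0 r0 →
      (∃ u' v' b y z : V, ((u' = u ∧ v' = v) ∨ (u' = v ∧ v' = u)) ∧
      b ≠ u' ∧ b ≠ v' ∧ y ≠ u' ∧ y ≠ v' ∧ z ≠ u' ∧ z ≠ v' ∧ b ≠ y ∧ b ≠ z ∧ y ≠ z ∧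
      G.Adj v' b ∧ G.Adj b y ∧ G.Adj b z ∧ G.Adj u' y ∧ G.Adj u' z) := by
    intro c0 d0 p0 q0 r0 h1 h2 h3 h4 h5 h6 h7 h8 h9 h10 hs b1 b2 b3 b4 b5
    refine ⟨c0, p0, d0, q0, r0, ?_, h1.symm, h8, h6.symm, h2.symm, h7.symm, h3.symm,
      h9, h10, h4, b3.symm, b4, b5, b1, b2⟩
    rw [Sym2.eq_iff] at hs
    tauto
  -- each of the six cross pairs is either a G-edge or the new edge; at most one is new
  have key : ∀ a b : V, G'.Adj a b → ¬ (s(a,b) = s(u,v)) → G.Adj a b := by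
    intro a b hab hne
    rcases hadj a b hab with h | h
    · exact h
    · exact absurd h hne
  by_cases e1 : s(c, p) = s(u, v)
  · have hne : ∀ a b : V, a = c → s(a,b) ≠ s(u,v) → True := fun _ _ _ _ => trivial
    refine helper c d p q r hcd hpq hpr hqr hcp hcq hcr hdp hdq hdr e1
      (key _ _ a2 ?_) (key _ _ a3 ?_) (key _ _ a4 ?_) (key _ _ a5 ?_) (key _ _ a6 ?_) <;>
    · intro hcontra
      rw [← e1, Sym2.eq_iff] at hcontra
      tauto
  · by_cases e2 : s(c, q) = s(u, v)
    · refine helper c d q p r hcd hpq.symm hqr hpr hcq hcp hcr hdq hdp hdr e2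
        (key _ _ a1 ?_) (key _ _ a3 ?_) (key _ _ a5 ?_) (key _ _ a4 ?_) (key _ _ a6 ?_) <;>
      · intro hcontra
        rw [← e2, Sym2.eq_iff] at hcontra
        tauto
    · by_cases e3 : s(c, r) = s(u, v)
      · refine helper c d r p q hcd hpr.symm hqr.symm hpq hcr hcp hcq hdr hdp hdq e3
          (key _ _ a1 ?_) (key _ _ a2 ?_) (key _ _ a6 ?_) (key _ _ a4 ?_) (key _ _ a5 ?_) <;>
        · intro hcontra
          rw [← e3, Sym2.eq_iff] at hcontra
          tauto
      · by_cases e4 : s(d, p) = s(u, v)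
        · refine helper d c p q r hcd.symm hpq hpr hqr hdp hdq hdr hcp hcq hcr e4
            (key _ _ a5 ?_) (key _ _ a6 ?_) (key _ _ a1 ?_) (key _ _ a2 ?_) (key _ _ a3 ?_) <;>
          · intro hcontra
            rw [← e4, Sym2.eq_iff] at hcontra
            tauto
        · by_cases e5 : s(d, q) = s(u, v)
          · refine helper d c q p r hcd.symm hpq.symm hqr hpr hdq hdp hdr hcq hcp hcr e5
              (key _ _ a4 ?_) (key _ _ a6 ?_) (key _ _ a2 ?_) (key _ _ a1 ?_) (key _ _ a3 ?_) <;>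
            · intro hcontra
              rw [← e5, Sym2.eq_iff] at hcontra
              tauto
          · by_cases e6 : s(d, r) = s(u, v)
            · refine helper d c r p q hcd.symm hpr.symm hqr.symm hpq hdr hdp hdq hcr hcp hcq e6
                (key _ _ a4 ?_) (key _ _ a5 ?_) (key _ _ a3 ?_) (key _ _ a1 ?_) (key _ _ a2 ?_) <;>
              · intro hcontra
                rw [← e6, Sym2.eq_iff] at hcontra
                tauto
            · exfalso
              apply hfree
              refine ⟨f, ?_⟩
              have g1 := key _ _ a1 e1
              have g2 := key _ _ a2 e2
              have g3 := key _ _ a3 e3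
              have g4 := key _ _ a4 e4
              have g5 := key _ _ a5 e5
              have g6 := key _ _ a6 e6
              have hcross : ∀ (i : Fin 2) (j : Fin 3), G.Adj (f (Sum.inl i)) (f (Sum.inr j)) := by
                intro i j
                fin_cases i <;> fin_cases j <;> first
                  | exact g1 | exact g2 | exact g3 | exact g4 | exact g5 | exact g6
              rintro (i | i) (j | j) hab
              · simp at hab
              · exact hcross i j
              · exact (hcross j i).symm
              · simp at hab

theorem sat_K23_min_degree_three_triangle (n : ℕ) (G : SimpleGraph (Fin n))
    (hG : K23Saturated G)
    (hmin : ∀ v, 3 ≤ (G.neighborSet v).ncard)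
    (hex : ∃ v, (G.neighborSet v).ncard = 3)
    (htri : ∀ v, (G.neighborSet v).ncard = 3 →
      ∀ a ∈ G.neighborSet v, ∀ b ∈ G.neighborSet v, a ≠ b → G.Adj a b) :
    2 * n - 2 ≤ G.edgeSet.ncard := by
  classical
  obtain ⟨hfree, hsat⟩ := hG
  have hdeg : ∀ v, (G.neighborSet v).ncard = G.degree v := by
    intro v
    rw [Set.ncard_eq_toFinset_card', ← neighborFinset_def]
    rfl
  have hmin' : ∀ v, 3 ≤ G.degree v := fun v => (hdeg v) ▸ hmin v
  have htri' : ∀ v, G.degree v = 3 → ∀ a ∈ G.neighborFinset v, ∀ b ∈ G.neighborFinset v,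
      a ≠ b → G.Adj a b := by
    intro v hv a ha b hb hab
    exact htri v (by rw [hdeg]; exact hv) a (by simpa using ha) b (by simpa using hb) hab
  set A : Finset (Fin n) := univ.filter (fun v => G.degree v = 3) with hA
  have hAmem : ∀ α, α ∈ A ↔ G.degree α = 3 := by intro α; simp [hA]
  set Q : Fin n → Finset (Fin n) := fun α => insert α (G.neighborFinset α) with hQdef
  have hmemQ : ∀ α, α ∈ Q α := fun α => mem_insert_self _ _
  have hNQ : ∀ α, G.neighborFinset α ⊆ Q α := fun α => subset_insert _ _
  have hQcard : ∀ α ∈ A, (Q α).card = 4 := by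
    intro α hα
    rw [hQdef]
    rw [card_insert_of_notMem (by simp), card_neighborFinset_eq_degree, (hAmem α).1 hα]
  have hQK4 : ∀ α ∈ A, ∀ x ∈ Q α, ∀ y ∈ Q α, x ≠ y → G.Adj x y := by
    intro α hα x hx y hy hxy
    rw [hQdef, mem_insert] at hx hy
    rcases hx with rfl | hx
    · rcases hy with rfl | hy
      · exact absurd rfl hxy
      · exact (mem_neighborFinset _ _ _).1 hy
    · rcases hy with rfl | hy
      · exact ((mem_neighborFinset _ _ _).1 hx).symm
      · exact htri' α ((hAmem α).1 hα) x hx y hy hxy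
  -- (a) two distinct Q's intersect in at most one vertex
  have hinter_le : ∀ α ∈ A, ∀ β ∈ A, Q α ≠ Q β → (Q α ∩ Q β).card ≤ 1 := by
    intro α hα β hβ hne
    by_contra hlt
    push_neg at hlt
    obtain ⟨x, hx, y, hy, hxy⟩ := one_lt_card.1 hlt
    rw [mem_inter] at hx hy
    -- pick e ∈ Q β \ Q α
    have hnsub : ¬ Q β ⊆ Q α := by
      intro hsub
      exact hne (eq_of_subset_of_card_le hsub (by rw [hQcard α hα, hQcard β hβ])).symm
    obtain ⟨e, heβ, heα⟩ := not_subset.1 hnsub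
    -- pick p q ∈ Q α \ {x, y}
    have hcard2 : (Q α \ {x, y}).card = 2 := by
      rw [card_sdiff_of_subset (by intro z hz; simp at hz; rcases hz with rfl | rfl; exacts [hx.1, hy.1])]
      rw [hQcard α hα, card_pair hxy]
    obtain ⟨p, q, hpq, hpqeq⟩ := card_eq_two.1 hcard2
    have hpmem : p ∈ Q α \ {x, y} := by rw [hpqeq]; simp
    have hqmem : q ∈ Q α \ {x, y} := by rw [hpqeq]; simp
    have hpQ : p ∈ Q α := (mem_sdiff.1 hpmem).1
    have hqQ : q ∈ Q α := (mem_sdiff.1 hqmem).1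
    have hpx : p ≠ x := fun h => (mem_sdiff.1 hpmem).2 (by simp [h])
    have hpy : p ≠ y := fun h => (mem_sdiff.1 hpmem).2 (by simp [h])
    have hqx : q ≠ x := fun h => (mem_sdiff.1 hqmem).2 (by simp [h])
    have hqy : q ≠ y := fun h => (mem_sdiff.1 hqmem).2 (by simp [h])
    have hex2 : e ≠ x := fun h => heα (h ▸ hx.1)
    have hey : e ≠ y := fun h => heα (h ▸ hy.1)
    have hep : e ≠ p := fun h => heα (h ▸ hpQ)
    have heq : e ≠ q := fun h => heα (h ▸ hqQ)
    exact hfree (hasK23_of_config G x y p q e hxy hpq hep.symm heq.symm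
      hpx.symm hqx.symm hex2.symm hpy.symm hqy.symm hey.symm
      (hQK4 α hα x hx.1 p hpQ (Ne.symm hpx)) (hQK4 α hα x hx.1 q hqQ (Ne.symm hqx))
      (hQK4 β hβ x hx.2 e heβ (Ne.symm hex2))
      (hQK4 α hα y hy.1 p hpQ (Ne.symm hpy)) (hQK4 α hα y hy.1 q hqQ (Ne.symm hqy))
      (hQK4 β hβ y hy.2 e heβ (Ne.symm hey)))
  -- (b1) helper for nonemptiness
  have b1 : ∀ α ∈ A, ∀ β ∈ A, Disjoint (Q α) (Q β) → ∀ b y z : Fin n,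
      b ≠ α → y ≠ z → b ≠ y → b ≠ z →
      G.Adj β b → G.Adj b y → G.Adj b z → G.Adj α y → G.Adj α z → False := by
    intro α hα β hβ hdisj b y z hbα hyz hby hbz haβb haby habz haay haaz
    have hyN : y ∈ G.neighborFinset α := (mem_neighborFinset _ _ _).2 haay
    have hzN : z ∈ G.neighborFinset α := (mem_neighborFinset _ _ _).2 haaz
    have hbQβ : b ∈ Q β := hNQ β ((mem_neighborFinset _ _ _).2 haβb)
    have hcard1 : (G.neighborFinset α \ {y, z}).card = 1 := by
      rw [card_sdiff_of_subset (by intro w hw; simp at hw; rcases hw with rfl | rfl; exacts [hyN, hzN])]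
      rw [card_neighborFinset_eq_degree, (hAmem α).1 hα, card_pair hyz]
    obtain ⟨p, hp⟩ := card_eq_one.1 hcard1
    have hpmem : p ∈ G.neighborFinset α \ {y, z} := by rw [hp]; simp
    have hpN : p ∈ G.neighborFinset α := (mem_sdiff.1 hpmem).1
    have hpy : p ≠ y := fun h => (mem_sdiff.1 hpmem).2 (by simp [h])
    have hpz : p ≠ z := fun h => (mem_sdiff.1 hpmem).2 (by simp [h])
    have hpQα : p ∈ Q α := hNQ α hpN
    have hpb : p ≠ b := fun h => (hdisj.forall_ne_finset hpQα hbQβ) (h ▸ rfl)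
    have hαp : α ≠ p := fun h => (G.irrefl (h ▸ ((mem_neighborFinset _ _ _).1 hpN)))
    have hyα : y ≠ α := fun h => G.irrefl (h ▸ haay)
    have hzα : z ≠ α := fun h => G.irrefl (h ▸ haaz)
    exact hfree (hasK23_of_config G y z α p b hyz hαp (Ne.symm hbα) hpb
      hyα (Ne.symm hpy) hby.symm hzα (Ne.symm hpz) hbz.symm
      haay.symm (htri' α ((hAmem α).1 hα) y hyN p hpN (fun h => hpy h.symm)) haby.symm
      haaz.symm (htri' α ((hAmem α).1 hα) z hzN p hpN (fun h => hpz h.symm)) habz.symm)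
  -- (b) two distinct Q's intersect
  have hinter_ne : ∀ α ∈ A, ∀ β ∈ A, Q α ≠ Q β → (Q α ∩ Q β).Nonempty := by
    intro α hα β hβ hne
    rw [← not_disjoint_iff_nonempty_inter]
    intro hdisj
    have hαβ : α ≠ β := fun h => (hdisj.forall_ne_finset (hmemQ α) (hmemQ β)) (h ▸ rfl)
    have hnadj : ¬ G.Adj α β := by
      intro hadj
      exact (hdisj.forall_ne_finset (hNQ α ((mem_neighborFinset _ _ _).2 hadj))
        (hmemQ β)) rfl
    obtain ⟨u', v', b, y, z, hcase, hbu, hbv, hyu, hyv, hzu, hzv, hby, hbz, hyz,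
      ha1, ha2, ha3, ha4, ha5⟩ := extract_config hfree hnadj (hsat α β hαβ hnadj)
    rcases hcase with ⟨rfl, rfl⟩ | ⟨rfl, rfl⟩
    · exact b1 u' hα v' hβ hdisj b y z hbu hyz hby hbz ha1 ha2 ha3 ha4 ha5
    · exact b1 u' hβ v' hα hdisj.symm b y z hbu hyz hby hbz ha1 ha2 ha3 ha4 ha5
  -- the family of cliques
  set 𝒬 : Finset (Finset (Fin n)) := A.image Q with h𝒬
  have h𝒬mem : ∀ Q' ∈ 𝒬, ∃ α ∈ A, Q α = Q' := by
    intro Q' hQ'; simpa [h𝒬] using hQ'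
  have hinter1 : ∀ Q1 ∈ 𝒬, ∀ Q2 ∈ 𝒬, Q1 ≠ Q2 → (Q1 ∩ Q2).card = 1 := by
    intro Q1 h1 Q2 h2 hne
    obtain ⟨α, hα, rfl⟩ := h𝒬mem Q1 h1
    obtain ⟨β, hβ, rfl⟩ := h𝒬mem Q2 h2
    refine le_antisymm (hinter_le α hα β hβ hne) ?_
    rw [Nat.one_le_iff_ne_zero, ← Nat.pos_iff_ne_zero, card_pos]
    exact hinter_ne α hα β hβ hne
  have h𝒬card4 : ∀ Q' ∈ 𝒬, Q'.card = 4 := by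
    intro Q' hQ'
    obtain ⟨α, hα, rfl⟩ := h𝒬mem Q' hQ'
    exact hQcard α hα
  have h𝒬K4 : ∀ Q' ∈ 𝒬, ∀ x ∈ Q', ∀ y ∈ Q', x ≠ y → G.Adj x y := by
    intro Q' hQ'
    obtain ⟨α, hα, rfl⟩ := h𝒬mem Q' hQ'
    exact hQK4 α hα
  set k : Fin n → ℕ := fun x => (𝒬.filter (fun Q' => x ∈ Q')).card with hk
  -- degree lower bound from multiplicity
  have hdegk : ∀ x, 3 * k x ≤ G.degree x := by
    intro x
    set F := 𝒬.filter (fun Q' => x ∈ Q') with hF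
    have hsub : F.biUnion (fun Q' => Q'.erase x) ⊆ G.neighborFinset x := by
      intro w hw
      simp only [mem_biUnion, hF, mem_filter] at hw
      obtain ⟨Q', ⟨hQ', hxQ'⟩, hwQ'⟩ := hw
      rw [mem_erase] at hwQ'
      exact (mem_neighborFinset _ _ _).2 (h𝒬K4 Q' hQ' x hxQ' w hwQ'.2 (Ne.symm hwQ'.1))
    have hdisj : ∀ Q1 ∈ F, ∀ Q2 ∈ F, Q1 ≠ Q2 → Disjoint (Q1.erase x) (Q2.erase x) := by
      intro Q1 h1 Q2 h2 hne
      rw [hF, mem_filter] at h1 h2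
      rw [Finset.disjoint_left]
      intro w hw1 hw2
      rw [mem_erase] at hw1 hw2
      have : ({x, w} : Finset (Fin n)) ⊆ Q1 ∩ Q2 := by
        intro a ha; simp at ha; rcases ha with rfl | rfl
        · exact mem_inter.2 ⟨h1.2, h2.2⟩
        · exact mem_inter.2 ⟨hw1.2, hw2.2⟩
      have h2le : 2 ≤ (Q1 ∩ Q2).card := by
        calc 2 = ({x, w} : Finset (Fin n)).card := (card_pair (Ne.symm hw1.1)).symm
        _ ≤ _ := card_le_card this
      rw [hinter1 Q1 h1.1 Q2 h2.1 hne] at h2le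
      omega
    calc 3 * k x = ∑ Q' ∈ F, 3 := by rw [sum_const, hk]; ring
    _ = ∑ Q' ∈ F, (Q'.erase x).card := by
        refine sum_congr rfl fun Q' hQ' => ?_
        rw [hF, mem_filter] at hQ'
        rw [card_erase_of_mem hQ'.2, h𝒬card4 Q' hQ'.1]
    _ = (F.biUnion (fun Q' => Q'.erase x)).card := (card_biUnion hdisj).symm
    _ ≤ (G.neighborFinset x).card := card_le_card hsub
    _ = G.degree x := card_neighborFinset_eq_degree _ _
  -- nonemptiness of the family
  obtain ⟨v₀, hv₀3⟩ := hex
  have hv₀A : v₀ ∈ A := (hAmem v₀).2 (by rw [← hdeg]; exact hv₀3)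
  have h𝒬ne : 𝒬.Nonempty := ⟨Q v₀, mem_image_of_mem Q hv₀A⟩
  set t := 𝒬.card with ht
  have ht1 : 1 ≤ t := card_pos.2 h𝒬ne
  set S : Finset (Fin n) := univ.filter (fun x => 2 ≤ k x) with hS
  have hSk : ∀ x ∈ S, 2 ≤ k x := fun x hx => (mem_filter.1 hx).2
  have hSdeg : ∀ x ∈ S, 6 ≤ G.degree x := by
    intro x hx
    have h1 := hSk x hx
    have h2 := hdegk x
    omega
  have hASdisj : Disjoint A S := by
    rw [Finset.disjoint_left]
    intro x hxA hxS
    have h1 := hSdeg x hxS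
    have h2 := (hAmem x).1 hxA
    omega
  -- F1 : A.card + ∑_{x ∈ S} k x ≤ 4 t
  have hAfib : A.card = ∑ Q' ∈ 𝒬, (A.filter (fun α => Q α = Q')).card :=
    card_eq_sum_card_fiberwise (fun α hα => mem_image_of_mem Q hα)
  have hSswap : ∑ x ∈ S, k x = ∑ Q' ∈ 𝒬, (S.filter (fun x => x ∈ Q')).card := by
    simp only [hk, card_filter]
    exact Finset.sum_comm
  have hperQ : ∀ Q' ∈ 𝒬, (A.filter (fun α => Q α = Q')).card
      + (S.filter (fun x => x ∈ Q')).card ≤ 4 := by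
    intro Q' hQ'
    have h1 : A.filter (fun α => Q α = Q') ⊆ Q' := by
      intro α hα
      rw [mem_filter] at hα
      exact hα.2 ▸ hmemQ α
    have h2 : S.filter (fun x => x ∈ Q') ⊆ Q' := fun x hx => (mem_filter.1 hx).2
    have hdisj2 : Disjoint (A.filter (fun α => Q α = Q')) (S.filter (fun x => x ∈ Q')) :=
      hASdisj.mono (filter_subset _ _) (filter_subset _ _)
    calc (A.filter (fun α => Q α = Q')).card + (S.filter (fun x => x ∈ Q')).card
        = ((A.filter (fun α => Q α = Q')) ∪ (S.filter (fun x => x ∈ Q'))).card :=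
          (card_union_of_disjoint hdisj2).symm
      _ ≤ Q'.card := card_le_card (union_subset h1 h2)
      _ = 4 := h𝒬card4 Q' hQ'
  have hF1 : A.card + ∑ x ∈ S, k x ≤ 4 * t := by
    rw [hAfib, hSswap, ← sum_add_distrib]
    calc ∑ Q' ∈ 𝒬, ((A.filter (fun α => Q α = Q')).card + (S.filter (fun x => x ∈ Q')).card)
        ≤ ∑ _Q' ∈ 𝒬, 4 := sum_le_sum hperQ
      _ = 4 * t := by rw [sum_const, smul_eq_mul, mul_comm]
  -- F3 : pair counting
  have hid : ∀ m : ℕ, m * m - m = m * (m - 1) := by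
    intro m
    cases m with
    | zero => rfl
    | succ p => rw [Nat.succ_sub_one, Nat.mul_succ, Nat.add_sub_cancel]
  set g : Finset (Fin n) × Finset (Fin n) → Fin n :=
    fun p => if h : (p.1 ∩ p.2).Nonempty then h.choose else v₀ with hg
  have hgmem : ∀ p ∈ 𝒬.offDiag, g p ∈ p.1 ∩ p.2 := by
    intro p hp
    rw [mem_offDiag] at hp
    have hne : (p.1 ∩ p.2).Nonempty := by
      rw [← card_pos, hinter1 _ hp.1 _ hp.2.1 hp.2.2]
      omega
    show (if h : (p.1 ∩ p.2).Nonempty then h.choose else v₀) ∈ p.1 ∩ p.2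
    rw [dif_pos hne]
    exact hne.choose_spec
  have hgS : ∀ p ∈ 𝒬.offDiag, g p ∈ S := by
    intro p hp
    have h1 := hgmem p hp
    rw [mem_inter] at h1
    rw [mem_offDiag] at hp
    rw [hS, mem_filter]
    refine ⟨mem_univ _, ?_⟩
    have hsub2 : ({p.1, p.2} : Finset (Finset (Fin n))) ⊆ 𝒬.filter (fun Q' => g p ∈ Q') := by
      intro Q' hQ'
      rw [mem_insert, mem_singleton] at hQ'
      rcases hQ' with rfl | rfl
      · exact mem_filter.2 ⟨hp.1, h1.1⟩
      · exact mem_filter.2 ⟨hp.2.1, h1.2⟩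
    calc 2 = ({p.1, p.2} : Finset (Finset (Fin n))).card := (card_pair hp.2.2).symm
      _ ≤ (𝒬.filter (fun Q' => g p ∈ Q')).card := card_le_card hsub2
  have hfib : 𝒬.offDiag.card = ∑ x ∈ S, (𝒬.offDiag.filter (fun p => g p = x)).card :=
    card_eq_sum_card_fiberwise hgS
  have hfible : ∀ x ∈ S, (𝒬.offDiag.filter (fun p => g p = x)).card ≤ k x * (k x - 1) := by
    intro x hx
    have hsub3 : 𝒬.offDiag.filter (fun p => g p = x) ⊆ (𝒬.filter (fun Q' => x ∈ Q')).offDiag := by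
      intro p hp
      rw [mem_filter] at hp
      obtain ⟨hpod, hgp⟩ := hp
      have hmem2 := hgmem p hpod
      rw [hgp, mem_inter] at hmem2
      rw [mem_offDiag] at hpod
      rw [mem_offDiag]
      exact ⟨mem_filter.2 ⟨hpod.1, hmem2.1⟩, mem_filter.2 ⟨hpod.2.1, hmem2.2⟩, hpod.2.2⟩
    calc (𝒬.offDiag.filter (fun p => g p = x)).card
        ≤ (𝒬.filter (fun Q' => x ∈ Q')).offDiag.card := card_le_card hsub3
      _ = k x * k x - k x := by rw [offDiag_card, hk]
      _ = k x * (k x - 1) := hid _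
  have hpairs : t * (t - 1) ≤ ∑ x ∈ S, k x * (k x - 1) := by
    rw [← hid t, ht, ← offDiag_card, hfib]
    exact sum_le_sum hfible
  have hkt : ∀ x, k x ≤ t := fun x => card_le_card (filter_subset _ _)
  have hstep : t * (t - 1) ≤ t * (∑ x ∈ S, (k x - 1)) := by
    refine le_trans hpairs ?_
    rw [mul_sum]
    exact sum_le_sum fun x _ => Nat.mul_le_mul_right _ (hkt x)
  have hF3a : t - 1 ≤ ∑ x ∈ S, (k x - 1) := Nat.le_of_mul_le_mul_left hstep (by omega)
  have hsum_split : ∑ x ∈ S, k x = (∑ x ∈ S, (k x - 1)) + S.card := by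
    have hcongr : ∀ x ∈ S, k x = (k x - 1) + 1 := by
      intro x hx
      have := hSk x hx
      omega
    calc ∑ x ∈ S, k x = ∑ x ∈ S, ((k x - 1) + 1) := sum_congr rfl hcongr
      _ = (∑ x ∈ S, (k x - 1)) + S.card := by rw [sum_add_distrib, sum_const, smul_eq_mul, mul_one]
  have hF3 : S.card + t ≤ (∑ x ∈ S, k x) + 1 := by omega
  -- degree sum split
  set R : Finset (Fin n) := univ \ (A ∪ S) with hR
  have hdisjR : Disjoint (A ∪ S) R := disjoint_sdiff
  have hunion : (A ∪ S) ∪ R = univ := union_sdiff_of_subset (subset_univ _)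
  have hsum : ∑ v, G.degree v
      = ∑ v ∈ A, G.degree v + ∑ v ∈ S, G.degree v + ∑ v ∈ R, G.degree v := by
    rw [← hunion, sum_union hdisjR, sum_union hASdisj]
  have h3A : ∑ v ∈ A, G.degree v = 3 * A.card := by
    rw [Finset.sum_congr rfl (fun v hv => (hAmem v).1 hv), sum_const, smul_eq_mul, mul_comm]
  have h3S : 3 * ∑ x ∈ S, k x ≤ ∑ v ∈ S, G.degree v := by
    rw [mul_sum]
    exact sum_le_sum fun x _ => hdegk x
  have h4R : 4 * R.card ≤ ∑ v ∈ R, G.degree v := by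
    have : ∀ v ∈ R, 4 ≤ G.degree v := by
      intro v hv
      rw [hR, mem_sdiff, mem_union, not_or] at hv
      have h1 := hmin' v
      have h2 : G.degree v ≠ 3 := fun h => hv.2.1 ((hAmem v).2 h)
      omega
    calc 4 * R.card = ∑ _v ∈ R, 4 := by rw [sum_const, smul_eq_mul, mul_comm]
      _ ≤ ∑ v ∈ R, G.degree v := sum_le_sum this
  have hncard : A.card + S.card + R.card = n := by
    have h1 : ((A ∪ S) ∪ R).card = n := by rw [hunion, card_univ, Fintype.card_fin]
    rw [card_union_of_disjoint hdisjR, card_union_of_disjoint hASdisj] at h1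
    exact h1
  -- handshake and conclusion
  have hhand : ∑ v, G.degree v = 2 * G.edgeFinset.card := G.sum_degrees_eq_twice_card_edges
  have hedge : G.edgeSet.ncard = G.edgeFinset.card := by
    rw [Set.ncard_eq_toFinset_card']; rfl
  rw [hedge]
  omega
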